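/- For any positive real number ρ ≠ 1, there exist real numbers λ₁, λ₂, λ₃, each satisfying |λᵢ| > 1/2, such that for every real x, x³ − (3(ρ+1)/(2(ρ−1)))x² + (ρ+1)/(2(ρ−1)) = (x − λ₁)(x − λ₂)(x − λ₃). In other words, all roots of the polynomial p_ρ are real and lie outside the interval [−1/2, 1/2]. -/
import Mathlib

lemma key_cubic_roots (c : ℝ) (hc : 1 < c) :
    ∃ l₁ l₂ l₃ : ℝ, 1/2 < |l₁| ∧ 1/2 < |l₂| ∧ 1/2 < |l₃| ∧
      ∀ x : ℝ, x^3 - (3*c/2) * x^2 + c/2 = (x - l₁) * (x - l₂) * (x - l₃) := by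
  set f : ℝ → ℝ := fun x => x^3 - (3*c/2)*x^2 + c/2 with hf
  have hcont : Continuous f := by continuity
  have h1 : f (-1) < 0 := by simp only [hf]; nlinarith
  have h2 : 0 < f (-(1/2)) := by simp only [hf]; nlinarith
  obtain ⟨r₁, hr₁mem, hr₁⟩ : ∃ r ∈ Set.Ioo (-1:ℝ) (-(1/2)), f r = 0 := by
    have := intermediate_value_Ioo (by norm_num : (-1:ℝ) ≤ -(1/2)) hcont.continuousOn
    obtain ⟨r, hr, hr0⟩ := this (Set.mem_Ioo.mpr ⟨h1, h2⟩)
    exact ⟨r, hr, hr0⟩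
  have h3 : 0 < f (1/2) := by simp only [hf]; nlinarith
  have h4 : f 1 < 0 := by simp only [hf]; nlinarith
  obtain ⟨r₂, hr₂mem, hr₂⟩ : ∃ r ∈ Set.Ioo (1/2:ℝ) 1, f r = 0 := by
    have := intermediate_value_Ioo' (by norm_num : (1/2:ℝ) ≤ 1) hcont.continuousOn
    obtain ⟨r, hr, hr0⟩ := this (Set.mem_Ioo.mpr ⟨h4, h3⟩)
    exact ⟨r, hr, hr0⟩
  obtain ⟨hr₁a, hr₁b⟩ := hr₁mem
  obtain ⟨hr₂a, hr₂b⟩ := hr₂mem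
  have hne : r₁ - r₂ ≠ 0 := by intro h; nlinarith [sub_eq_zero.mp h]
  have hfr₁ : r₁^3 - (3*c/2)*r₁^2 + c/2 = 0 := hr₁
  have hfr₂ : r₂^3 - (3*c/2)*r₂^2 + c/2 = 0 := hr₂
  have hP : r₁^2 + r₁*r₂ + r₂^2 - 3*c/2*(r₁+r₂) = 0 := by
    have h : (r₁ - r₂) * (r₁^2 + r₁*r₂ + r₂^2 - 3*c/2*(r₁+r₂)) = 0 := by
      linear_combination hfr₁ - hfr₂
    exact (mul_eq_zero.mp h).resolve_left hne
  refine ⟨r₁, r₂, 3*c/2 - r₁ - r₂, ?_, ?_, ?_, ?_⟩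
  · rw [abs_of_neg (by linarith)]; linarith
  · rw [abs_of_pos (by linarith)]; linarith
  · rw [abs_of_pos (by nlinarith)]; nlinarith
  · intro x
    linear_combination (x - r₁) * hP + hfr₁

lemma key_cubic_all (c : ℝ) (hc : 1 < |c|) :
    ∃ l₁ l₂ l₃ : ℝ, 1/2 < |l₁| ∧ 1/2 < |l₂| ∧ 1/2 < |l₃| ∧
      ∀ x : ℝ, x^3 - (3*c/2) * x^2 + c/2 = (x - l₁) * (x - l₂) * (x - l₃) := by
  rcases lt_or_ge 1 c with h | h
  · exact key_cubic_roots c h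
  · have hc' : 1 < -c := by
      rcases abs_cases c with ⟨h1, _⟩ | ⟨h1, _⟩ <;> simp_all <;> linarith
    obtain ⟨m₁, m₂, m₃, hm₁, hm₂, hm₃, hm⟩ := key_cubic_roots (-c) hc'
    refine ⟨-m₁, -m₂, -m₃, by rwa [abs_neg], by rwa [abs_neg], by rwa [abs_neg], ?_⟩
    intro x
    have := hm (-x)
    linear_combination -this

theorem roots_of_p_rho_real_outside (ρ : ℝ) (hρ : 0 < ρ) (hρ1 : ρ ≠ 1) :
    ∃ l₁ l₂ l₃ : ℝ, 1/2 < |l₁| ∧ 1/2 < |l₂| ∧ 1/2 < |l₃| ∧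
      ∀ x : ℝ, x^3 - (3 * (ρ + 1) / (2 * (ρ - 1))) * x^2 + (ρ + 1) / (2 * (ρ - 1))
        = (x - l₁) * (x - l₂) * (x - l₃) := by
  have hd : ρ - 1 ≠ 0 := sub_ne_zero.mpr hρ1
  set c : ℝ := (ρ + 1) / (ρ - 1) with hcdef
  have hc : 1 < |c| := by
    rw [hcdef, abs_div]
    rw [lt_div_iff₀ (abs_pos.mpr hd), one_mul]
    rcases abs_cases (ρ - 1) with ⟨h1, _⟩ | ⟨h1, _⟩ <;>
      rcases abs_cases (ρ + 1) with ⟨h2, _⟩ | ⟨h2, _⟩ <;> nlinarith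
  obtain ⟨l₁, l₂, l₃, h₁, h₂, h₃, h⟩ := key_cubic_all c hc
  refine ⟨l₁, l₂, l₃, h₁, h₂, h₃, fun x => ?_⟩
  have e1 : 3 * (ρ + 1) / (2 * (ρ - 1)) = 3 * c / 2 := by
    rw [hcdef, mul_div_assoc', div_div, mul_comm (ρ - 1) 2]
  have e2 : (ρ + 1) / (2 * (ρ - 1)) = c / 2 := by
    rw [hcdef, div_div, mul_comm (ρ - 1) 2]
  rw [e1, e2]; exact h x
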